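/- Let Ψ: ℝⁿ → ℂ be continuous with Re Ψ ≥ 0, and suppose there exist M > 0 and β ∈ (0,2] such that Re Ψ(ξ) ≥ ‖ξ‖^β whenever ‖ξ‖ > M. Then for every t > 0 the function ξ ↦ e^{−tΨ(ξ)} is integrable on ℝⁿ, and for every T > 0 there is a constant C > 0 such that the function p_t(x) := (2π)^{−n} ∫_{ℝⁿ} e^{−tΨ(ξ)} e^{−i⟨x,ξ⟩} dξ satisfies |p_t(x)| ≤ C t^{−n/β} for all t ∈ (0,T] and all x ∈ ℝⁿ. -/

import Mathlib

open MeasureTheory Complex Set Filter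

noncomputable section

lemma auxTendsto {β : ℝ} (hβ : 0 < β) {ρ : ℝ} (hρ : 0 ≤ ρ) :
    Tendsto (fun r : ℝ => (1 + r) ^ ρ * Real.exp (-r ^ β)) atTop (nhds 0) := by
  have h2 : Tendsto (fun r : ℝ => (r ^ β) ^ (ρ / β) * Real.exp (-1 * r ^ β)) atTop (nhds 0) :=
    (tendsto_rpow_mul_exp_neg_mul_atTop_nhds_zero (ρ / β) 1 one_pos).comp (tendsto_rpow_atTop hβ)
  have h3 : Tendsto (fun r : ℝ => (2 : ℝ) ^ ρ * ((r ^ β) ^ (ρ / β) * Real.exp (-1 * r ^ β)))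
      atTop (nhds 0) := by simpa using h2.const_mul ((2 : ℝ) ^ ρ)
  refine squeeze_zero' ?_ ?_ h3
  · filter_upwards [eventually_ge_atTop (0 : ℝ)] with r hr
    positivity
  · filter_upwards [eventually_ge_atTop (1 : ℝ)] with r hr
    have hr0 : (0 : ℝ) < r := lt_of_lt_of_le one_pos hr
    have e1 : (r ^ β) ^ (ρ / β) = r ^ ρ := by
      rw [← Real.rpow_mul hr0.le]
      congr 1
      field_simp
    calc (1 + r) ^ ρ * Real.exp (-r ^ β)
        ≤ (2 * r) ^ ρ * Real.exp (-r ^ β) := by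
          gcongr
          all_goals linarith
      _ = 2 ^ ρ * ((r ^ β) ^ (ρ / β) * Real.exp (-1 * r ^ β)) := by
          rw [Real.mul_rpow (by norm_num) hr0.le, e1, neg_one_mul, mul_assoc]

lemma auxBound (n : ℕ) {β : ℝ} (hβ : 0 < β) :
    ∃ K : ℝ, ∀ r : ℝ, 0 ≤ r → (1 + r) ^ ((n : ℝ) + 1) * Real.exp (-r ^ β) ≤ K := by
  set ρ : ℝ := (n : ℝ) + 1 with hρdef
  have hρ : (0 : ℝ) ≤ ρ := by positivity
  obtain ⟨R, hR⟩ := eventually_atTop.1 ((auxTendsto hβ hρ).eventually_lt_const one_pos)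
  set R' := max R 0 with hR'
  have hrpow : Continuous fun r : ℝ => r ^ β :=
    continuous_iff_continuousAt.mpr fun x => Real.continuousAt_rpow_const x β (Or.inr hβ.le)
  have hcont : ContinuousOn (fun r : ℝ => (1 + r) ^ ρ * Real.exp (-r ^ β)) (Icc 0 R') := by
    intro r hr
    have h1 : ContinuousAt (fun r : ℝ => (1 + r) ^ ρ) r := by
      have := (Real.continuousAt_rpow_const (1 + r) ρ (Or.inl (by nlinarith [hr.1]))).comp
        ((continuous_const.add continuous_id).continuousAt (x := r))
      exact this
    exact (h1.mul ((Real.continuous_exp.comp hrpow.neg).continuousAt)).continuousWithinAt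
  obtain ⟨C, hC⟩ := isCompact_Icc.exists_bound_of_continuousOn hcont
  refine ⟨max C 1, fun r hr => ?_⟩
  by_cases h' : r ≤ R'
  · refine le_trans ?_ (le_max_left C 1)
    have h2 := hC r ⟨hr, h'⟩
    rw [Real.norm_eq_abs] at h2
    exact le_trans (le_abs_self _) h2
  · have hrR : R ≤ r := le_trans (le_max_left R 0) (le_of_not_ge h')
    exact (hR r hrR).le.trans (le_max_right C 1)

lemma integrableExpNegRpowNorm (n : ℕ) {β : ℝ} (hβ : 0 < β) :
    Integrable (fun x : EuclideanSpace ℝ (Fin n) => Real.exp (-‖x‖ ^ β)) := by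
  obtain ⟨K, hK⟩ := auxBound n hβ
  have hrpow : Continuous fun r : ℝ => r ^ β :=
    continuous_iff_continuousAt.mpr fun x => Real.continuousAt_rpow_const x β (Or.inr hβ.le)
  have hint : Integrable
      (fun x : EuclideanSpace ℝ (Fin n) => K * (1 + ‖x‖) ^ (-((n : ℝ) + 1))) := by
    refine (integrable_one_add_norm ?_).const_mul K
    rw [finrank_euclideanSpace_fin]
    linarith
  refine hint.mono' ?_ ?_
  · exact (Real.continuous_exp.comp ((hrpow.comp continuous_norm).neg)).aestronglyMeasurable
  · refine ae_of_all _ fun x => ?_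
    have h1 : (0 : ℝ) < 1 + ‖x‖ := by positivity
    rw [Real.norm_eq_abs, _root_.abs_of_nonneg (Real.exp_pos _).le]
    calc Real.exp (-‖x‖ ^ β)
        = ((1 + ‖x‖) ^ ((n : ℝ) + 1) * Real.exp (-‖x‖ ^ β)) * (1 + ‖x‖) ^ (-((n : ℝ) + 1)) := by
          rw [Real.rpow_neg h1.le, mul_comm,
            inv_mul_cancel_left₀ (ne_of_gt (Real.rpow_pos_of_pos h1 _))]
      _ ≤ K * (1 + ‖x‖) ^ (-((n : ℝ) + 1)) :=
          mul_le_mul_of_nonneg_right (hK _ (norm_nonneg x)) (Real.rpow_nonneg h1.le _)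

lemma scaledIntegral (n : ℕ) {β : ℝ} (hβ : 0 < β) {t : ℝ} (ht : 0 < t) :
    Integrable (fun x : EuclideanSpace ℝ (Fin n) => Real.exp (-(t * ‖x‖ ^ β))) ∧
    ∫ x : EuclideanSpace ℝ (Fin n), Real.exp (-(t * ‖x‖ ^ β)) =
      t ^ (-((n : ℝ) / β)) * ∫ x : EuclideanSpace ℝ (Fin n), Real.exp (-‖x‖ ^ β) := by
  set R : ℝ := t ^ (1 / β) with hRdef
  have hR0 : 0 < R := Real.rpow_pos_of_pos ht _
  have hRβ : R ^ β = t := by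
    rw [hRdef, ← Real.rpow_mul ht.le, one_div, inv_mul_cancel₀ hβ.ne', Real.rpow_one]
  have key : (fun x : EuclideanSpace ℝ (Fin n) => Real.exp (-(t * ‖x‖ ^ β)))
      = fun x => Real.exp (-‖R • x‖ ^ β) := by
    funext x
    congr 2
    rw [norm_smul, Real.norm_eq_abs, abs_of_pos hR0,
      Real.mul_rpow hR0.le (norm_nonneg x), hRβ]
  have hfin : (R ^ Module.finrank ℝ (EuclideanSpace ℝ (Fin n)))⁻¹ = t ^ (-((n : ℝ) / β)) := by
    rw [finrank_euclideanSpace_fin, hRdef, ← Real.rpow_natCast (t ^ (1 / β)) n,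
      ← Real.rpow_mul ht.le, ← Real.rpow_neg ht.le]
    congr 1
    ring
  constructor
  · rw [key]
    exact (integrableExpNegRpowNorm n hβ).comp_smul hR0.ne'
  · rw [key]
    have := MeasureTheory.Measure.integral_comp_smul_of_nonneg (volume)
      (fun x : EuclideanSpace ℝ (Fin n) => Real.exp (-‖x‖ ^ β)) R (hR := hR0.le)
    rw [this, hfin, smul_eq_mul]


/-- The transition density `p_t(x) = (2π)^{-n} ∫ e^{-tΨ(ξ)} e^{-i⟨x,ξ⟩} dξ`. -/
def transDensity (n : ℕ) (Ψ : EuclideanSpace ℝ (Fin n) → ℂ) (t : ℝ)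
    (x : EuclideanSpace ℝ (Fin n)) : ℂ :=
  (((2 * Real.pi) ^ n)⁻¹ : ℝ) *
    ∫ ξ : EuclideanSpace ℝ (Fin n),
      Complex.exp (-(t : ℂ) * Ψ ξ) * Complex.exp (-(Complex.I * ((inner ℝ x ξ : ℝ) : ℂ)))

theorem stmt2 (n : ℕ) (Ψ : EuclideanSpace ℝ (Fin n) → ℂ) (hΨcont : Continuous Ψ)
    (hΨre : ∀ ξ, 0 ≤ (Ψ ξ).re) (M β : ℝ) (hM : 0 < M) (hβ : β ∈ Set.Ioc (0 : ℝ) 2)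
    (hgrowth : ∀ ξ : EuclideanSpace ℝ (Fin n), M < ‖ξ‖ → ‖ξ‖ ^ β ≤ (Ψ ξ).re) :
    (∀ t : ℝ, 0 < t →
      Integrable (fun ξ : EuclideanSpace ℝ (Fin n) => Complex.exp (-(t : ℂ) * Ψ ξ))) ∧
    ∀ T : ℝ, 0 < T → ∃ C : ℝ, 0 < C ∧ ∀ t ∈ Set.Ioc (0 : ℝ) T,
      ∀ x : EuclideanSpace ℝ (Fin n),
        ‖transDensity n Ψ t x‖ ≤ C * t ^ (-((n : ℝ) / β)) := by
  obtain ⟨hβ0, hβ2⟩ := hβ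
  set g : ℝ → EuclideanSpace ℝ (Fin n) → ℝ := fun t ξ =>
    (Metric.closedBall (0 : EuclideanSpace ℝ (Fin n)) M).indicator (fun _ => (1 : ℝ)) ξ
      + Real.exp (-(t * ‖ξ‖ ^ β)) with hgdef
  have hnorm : ∀ (t : ℝ) (ξ), ‖Complex.exp (-(t : ℂ) * Ψ ξ)‖ = Real.exp (-(t * (Ψ ξ).re)) := by
    intro t ξ
    rw [Complex.norm_exp]
    congr 1
    simp [Complex.mul_re]
  have hind : Integrable
      ((Metric.closedBall (0 : EuclideanSpace ℝ (Fin n)) M).indicator (fun _ => (1 : ℝ))) := by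
    rw [integrable_indicator_iff measurableSet_closedBall]
    exact integrableOn_const measure_closedBall_lt_top.ne
  have hgint : ∀ t : ℝ, 0 < t → Integrable (g t) := fun t ht =>
    hind.add (scaledIntegral n hβ0 ht).1
  have hle : ∀ (t : ℝ), 0 < t → ∀ ξ, Real.exp (-(t * (Ψ ξ).re)) ≤ g t ξ := by
    intro t ht ξ
    by_cases hξ : ‖ξ‖ ≤ M
    · have h1 : Real.exp (-(t * (Ψ ξ).re)) ≤ 1 := by
        rw [Real.exp_le_one_iff]
        have := hΨre ξ
        nlinarith
      have h2 : (Metric.closedBall (0 : EuclideanSpace ℝ (Fin n)) M).indicator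
          (fun _ => (1 : ℝ)) ξ = 1 := by
        rw [Set.indicator_of_mem]
        rw [Metric.mem_closedBall, dist_zero_right]
        exact hξ
      rw [hgdef]
      simp only [h2]
      have := (Real.exp_pos (-(t * ‖ξ‖ ^ β))).le
      linarith
    · have h1 : Real.exp (-(t * (Ψ ξ).re)) ≤ Real.exp (-(t * ‖ξ‖ ^ β)) := by
        apply Real.exp_le_exp.2
        have := hgrowth ξ (lt_of_not_ge hξ)
        nlinarith
      have h2 : (0 : ℝ) ≤ (Metric.closedBall (0 : EuclideanSpace ℝ (Fin n)) M).indicator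
          (fun _ => (1 : ℝ)) ξ := Set.indicator_nonneg (fun _ _ => zero_le_one) ξ
      rw [hgdef]
      dsimp only
      linarith
  have hIntPart : ∀ t : ℝ, 0 < t →
      Integrable (fun ξ : EuclideanSpace ℝ (Fin n) => Complex.exp (-(t : ℂ) * Ψ ξ)) := by
    intro t ht
    refine (hgint t ht).mono' ?_ (ae_of_all _ fun ξ => ?_)
    · exact (Complex.continuous_exp.comp (continuous_const.mul hΨcont)).aestronglyMeasurable
    · rw [hnorm t ξ]
      exact hle t ht ξ
  refine ⟨hIntPart, fun T hT => ?_⟩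
  set c : ℝ := ((2 * Real.pi) ^ n)⁻¹ with hcdef
  have hc : 0 < c := by positivity
  set I : ℝ := ∫ x : EuclideanSpace ℝ (Fin n), Real.exp (-‖x‖ ^ β) with hIdef
  have hI : 0 ≤ I := integral_nonneg fun x => (Real.exp_pos _).le
  set V : ℝ := (volume (Metric.closedBall (0 : EuclideanSpace ℝ (Fin n)) M)).toReal with hVdef
  have hV : 0 ≤ V := ENNReal.toReal_nonneg
  refine ⟨c * (V * T ^ ((n : ℝ) / β) + I) + 1, by positivity, fun t ht x => ?_⟩
  set z : ℝ := -((n : ℝ) / β) with hzdef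
  have htz : 0 < t ^ z := Real.rpow_pos_of_pos ht.1 _
  have hTz : T ^ z ≤ t ^ z :=
    Real.rpow_le_rpow_of_nonpos ht.1 ht.2 (neg_nonpos.2 (by positivity))
  have h1 : 1 ≤ T ^ ((n : ℝ) / β) * t ^ z := by
    have e : T ^ ((n : ℝ) / β) * T ^ z = 1 := by
      rw [hzdef, ← Real.rpow_add hT]
      simp
    calc (1 : ℝ) = T ^ ((n : ℝ) / β) * T ^ z := e.symm
      _ ≤ T ^ ((n : ℝ) / β) * t ^ z := by
          exact mul_le_mul_of_nonneg_left hTz (Real.rpow_nonneg hT.le _)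
  -- bound on the integral of norms
  have hbound : ‖transDensity n Ψ t x‖ ≤ c * (V + t ^ z * I) := by
    rw [transDensity]
    rw [norm_mul, Complex.norm_real, Real.norm_eq_abs, _root_.abs_of_nonneg hc.le]
    refine mul_le_mul_of_nonneg_left ?_ hc.le
    refine le_trans (le_of_eq rfl) ?_
    refine le_trans (norm_integral_le_integral_norm _) ?_
    have hmono : ∫ ξ : EuclideanSpace ℝ (Fin n),
        ‖Complex.exp (-(t : ℂ) * Ψ ξ) * Complex.exp (-(Complex.I * ((inner ℝ x ξ : ℝ) : ℂ)))‖
        ≤ ∫ ξ, g t ξ := by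
      refine integral_mono_of_nonneg (ae_of_all _ fun ξ => norm_nonneg _)
        (hgint t ht.1) (ae_of_all _ fun ξ => ?_)
      simp only []
      rw [norm_mul, hnorm t ξ]
      have habs : ‖Complex.exp (-(Complex.I * ((inner ℝ x ξ : ℝ) : ℂ)))‖ = 1 := by
        rw [Complex.norm_exp]
        norm_num [Complex.mul_re]
      rw [habs, mul_one]
      exact hle t ht.1 ξ
    refine hmono.trans (le_of_eq ?_)
    rw [hgdef]
    rw [integral_add hind (scaledIntegral n hβ0 ht.1).1]
    rw [(scaledIntegral n hβ0 ht.1).2]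
    rw [integral_indicator_const _ measurableSet_closedBall]
    simp [hVdef, hIdef, hzdef, smul_eq_mul, Measure.real]
  refine hbound.trans ?_
  have hcV : c * V ≤ c * V * (T ^ ((n : ℝ) / β) * t ^ z) :=
    le_mul_of_one_le_right (by positivity) h1
  have expand : (c * (V * T ^ ((n : ℝ) / β) + I) + 1) * t ^ z
      = c * V * (T ^ ((n : ℝ) / β) * t ^ z) + c * I * t ^ z + t ^ z := by ring
  rw [expand]
  have : c * (V + t ^ z * I) = c * V + c * I * t ^ z := by ring
  rw [this]
  linarith
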